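/- Let β ∈ ℝ, D > 0, and let φ : ℝ² → ℝ be continuous. Let P₁, P₂, P₃ ∈ ℝ² be the vertices of a nondegenerate triangle (P₂ − P₁ and P₃ − P₁ linearly independent), and set F_{1i} = ℱ(e_i; P₁, P₂) and F_{2i} = ℱ(e_i; P₁, P₃) for i = 1, 2, where e₁ = (1,0), e₂ = (0,1). Then the 3×3 matrix with rows (0, 0, 1), (F₁₁, F₁₂, 1), (F₂₁, F₂₂, 1) is invertible; consequently, for each j ∈ {1,2,3} there exist unique real numbers m_{j,1}, m_{j,2} and u_j⁰ such that the function u_j defined on the triangle by u_j(P₁) = u_j⁰, u_j(P₂) = u_j⁰ + m_{j,1}F₁₁ + m_{j,2}F₁₂, u_j(P₃) = u_j⁰ + m_{j,1}F₂₁ + m_{j,2}F₂₂ satisfies the interpolative constraints u_j(P_i) = δ_{ij} at the three vertices. -/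

import Mathlib

open MeasureTheory intervalIntegral
open scoped RealInnerProductSpace

/-- The exponentially weighted line functional `ℱ(v; P, Q)` of a constant vector field `v`
along the segment from `P` to `Q`:
`ℱ(v; P, Q) = (e^{−βφ(Q)}/D) ∫₀^S e^{βφ(P + s·n)} (v · n) ds`,
where `S = ‖Q − P‖` and `n = (Q − P)/S`. -/
noncomputable def expFitFunctional (β D : ℝ) (φ : EuclideanSpace ℝ (Fin 2) → ℝ)
    (v P Q : EuclideanSpace ℝ (Fin 2)) : ℝ :=
  (Real.exp (-(β * φ Q)) / D) *
    ∫ s in (0:ℝ)..‖Q - P‖,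
      Real.exp (β * φ (P + s • (‖Q - P‖⁻¹ • (Q - P)))) * ⟪v, ‖Q - P‖⁻¹ • (Q - P)⟫

/-- Key structural lemma: `ℱ(e_i; P, Q) = c * (Q - P) i` for a positive constant `c`
independent of `i`, when `P ≠ Q`. -/
lemma expFitFunctional_single (β D : ℝ) (hD : 0 < D) (φ : EuclideanSpace ℝ (Fin 2) → ℝ)
    (hφ : Continuous φ) (P Q : EuclideanSpace ℝ (Fin 2)) (hPQ : Q - P ≠ 0) :
    ∃ c : ℝ, 0 < c ∧ ∀ i : Fin 2,
      expFitFunctional β D φ (EuclideanSpace.single i 1) P Q = c * (Q - P) i := by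
  set S : ℝ := ‖Q - P‖ with hS
  have hSpos : 0 < S := by simpa [hS] using norm_pos_iff.mpr hPQ
  set g : ℝ → ℝ := fun s => Real.exp (β * φ (P + s • (S⁻¹ • (Q - P)))) with hg
  have hgc : Continuous g := by
    apply Real.continuous_exp.comp
    exact (continuous_const.mul (hφ.comp (continuous_const.add
      (continuous_id.smul continuous_const))))
  have hint : 0 < ∫ s in (0:ℝ)..S, g s :=
    intervalIntegral_pos_of_pos (hgc.intervalIntegrable 0 S)
      (fun s => Real.exp_pos _) hSpos
  refine ⟨(Real.exp (-(β * φ Q)) / D) * (∫ s in (0:ℝ)..S, g s) * S⁻¹, ?_, ?_⟩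
  · have h1 : 0 < Real.exp (-(β * φ Q)) / D := div_pos (Real.exp_pos _) hD
    positivity
  · intro i
    have hinner : ∀ s : ℝ,
        ⟪EuclideanSpace.single i (1:ℝ), S⁻¹ • (Q - P)⟫ = S⁻¹ * (Q - P) i := by
      intro s
      rw [EuclideanSpace.inner_single_left]
      simp
    unfold expFitFunctional
    rw [← hS]
    have : (∫ s in (0:ℝ)..S,
        Real.exp (β * φ (P + s • (S⁻¹ • (Q - P)))) *
          ⟪EuclideanSpace.single i (1:ℝ), S⁻¹ • (Q - P)⟫)
        = (∫ s in (0:ℝ)..S, g s) * (S⁻¹ * (Q - P) i) := by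
      rw [← intervalIntegral.integral_mul_const]
      congr 1
      funext s
      rw [hinner s]
    rw [this]
    ring

/-- For a nondegenerate triangle with vertices `P₁, P₂, P₃` and
`F_{1i} = ℱ(e_i; P₁, P₂)`, `F_{2i} = ℱ(e_i; P₁, P₃)`, the 3×3 matrix with rows
`(0,0,1)`, `(F₁₁,F₁₂,1)`, `(F₂₁,F₂₂,1)` is invertible; consequently for each `j ∈ {1,2,3}`
there exist unique reals `m_{j,1}, m_{j,2}, u_j⁰` such that the basis function `u_j` with
values `u_j(P₁) = u_j⁰`, `u_j(P₂) = u_j⁰ + m_{j,1}F₁₁ + m_{j,2}F₁₂`,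
`u_j(P₃) = u_j⁰ + m_{j,1}F₂₁ + m_{j,2}F₂₂` satisfies `u_j(P_i) = δ_{ij}` at the vertices. -/
theorem expFit_basis_exists_unique
    (β D : ℝ) (hD : 0 < D) (φ : EuclideanSpace ℝ (Fin 2) → ℝ) (hφ : Continuous φ)
    (P₁ P₂ P₃ : EuclideanSpace ℝ (Fin 2))
    (hind : LinearIndependent ℝ ![P₂ - P₁, P₃ - P₁])
    (F₁₁ F₁₂ F₂₁ F₂₂ : ℝ)
    (hF₁₁ : F₁₁ = expFitFunctional β D φ (EuclideanSpace.single 0 1) P₁ P₂)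
    (hF₁₂ : F₁₂ = expFitFunctional β D φ (EuclideanSpace.single 1 1) P₁ P₂)
    (hF₂₁ : F₂₁ = expFitFunctional β D φ (EuclideanSpace.single 0 1) P₁ P₃)
    (hF₂₂ : F₂₂ = expFitFunctional β D φ (EuclideanSpace.single 1 1) P₁ P₃) :
    IsUnit (Matrix.det !![(0:ℝ), 0, 1; F₁₁, F₁₂, 1; F₂₁, F₂₂, 1]) ∧
    ∀ j : Fin 3, ∃! mu : ℝ × ℝ × ℝ,
      mu.2.2 = (if j = 0 then (1:ℝ) else 0) ∧
      mu.2.2 + mu.1 * F₁₁ + mu.2.1 * F₁₂ = (if j = 1 then (1:ℝ) else 0) ∧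
      mu.2.2 + mu.1 * F₂₁ + mu.2.1 * F₂₂ = (if j = 2 then (1:ℝ) else 0) := by
  set a : EuclideanSpace ℝ (Fin 2) := P₂ - P₁ with ha
  set b : EuclideanSpace ℝ (Fin 2) := P₃ - P₁ with hb
  have hpair := LinearIndependent.pair_iff.mp (by simpa using hind)
  have hane : a ≠ 0 := by
    intro h
    have := (hpair 1 0 (by simp [h])).1
    norm_num at this
  have hbne : b ≠ 0 := by
    intro h
    have := (hpair 0 1 (by simp [h])).2
    norm_num at this
  -- the cross product of a and b is nonzero
  have hcross : a 0 * b 1 - a 1 * b 0 ≠ 0 := by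
    intro hd
    have key : ∀ s t : ℝ, s * a 0 + t * b 0 = 0 → s * a 1 + t * b 1 = 0 →
        s = 0 ∧ t = 0 := by
      intro s t h0 h1
      apply hpair
      ext i
      fin_cases i
      · simpa [PiLp.add_apply, PiLp.smul_apply, smul_eq_mul] using h0
      · simpa [PiLp.add_apply, PiLp.smul_apply, smul_eq_mul] using h1
    rcases key (b 1) (-(a 1)) (by ring_nf; linarith) (by ring) with ⟨hb1, ha1⟩
    have ha1' : a 1 = 0 := by linarith
    rcases key (b 0) (-(a 0)) (by ring) (by rw [ha1', hb1]; ring) with ⟨hb0, ha0⟩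
    have ha0' : a 0 = 0 := by linarith
    apply hane
    ext i
    fin_cases i
    · exact ha0'
    · exact ha1'
  obtain ⟨c₁, hc₁, hfc₁⟩ := expFitFunctional_single β D hD φ hφ P₁ P₂
    (by rw [← ha]; exact hane)
  obtain ⟨c₂, hc₂, hfc₂⟩ := expFitFunctional_single β D hD φ hφ P₁ P₃
    (by rw [← hb]; exact hbne)
  have e₁₁ : F₁₁ = c₁ * a 0 := by rw [hF₁₁, hfc₁ 0, ha]
  have e₁₂ : F₁₂ = c₁ * a 1 := by rw [hF₁₂, hfc₁ 1, ha]
  have e₂₁ : F₂₁ = c₂ * b 0 := by rw [hF₂₁, hfc₂ 0, hb]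
  have e₂₂ : F₂₂ = c₂ * b 1 := by rw [hF₂₂, hfc₂ 1, hb]
  have hΔ : F₁₁ * F₂₂ - F₁₂ * F₂₁ ≠ 0 := by
    rw [e₁₁, e₁₂, e₂₁, e₂₂]
    have : c₁ * a 0 * (c₂ * b 1) - c₁ * a 1 * (c₂ * b 0)
        = c₁ * c₂ * (a 0 * b 1 - a 1 * b 0) := by ring
    rw [this]
    exact mul_ne_zero (mul_ne_zero (ne_of_gt hc₁) (ne_of_gt hc₂)) hcross
  constructor
  · rw [isUnit_iff_ne_zero]
    intro h
    apply hΔ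
    rw [Matrix.det_fin_three] at h
    simp at h
    linarith
  · intro j
    set r0 : ℝ := if j = 0 then (1:ℝ) else 0 with hr0
    set r1 : ℝ := if j = 1 then (1:ℝ) else 0 with hr1
    set r2 : ℝ := if j = 2 then (1:ℝ) else 0 with hr2
    refine ⟨⟨((r1 - r0) * F₂₂ - (r2 - r0) * F₁₂) / (F₁₁ * F₂₂ - F₁₂ * F₂₁),
      ((r2 - r0) * F₁₁ - (r1 - r0) * F₂₁) / (F₁₁ * F₂₂ - F₁₂ * F₂₁), r0⟩, ?_, ?_⟩
    · refine ⟨rfl, ?_, ?_⟩ <;> (rw [div_mul_eq_mul_div, div_mul_eq_mul_div, add_assoc, ← add_div, add_comm r0, ← eq_sub_iff_add_eq, div_eq_iff hΔ]; ring)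
    · rintro ⟨y1, y2, y3⟩ ⟨h0, h1, h2⟩
      simp only at h0 h1 h2 ⊢
      subst h0
      have e1 : y1 * F₁₁ + y2 * F₁₂ = r1 - r0 := by linarith
      have e2 : y1 * F₂₁ + y2 * F₂₂ = r2 - r0 := by linarith
      have hy1 : y1 * (F₁₁ * F₂₂ - F₁₂ * F₂₁) = (r1 - r0) * F₂₂ - (r2 - r0) * F₁₂ := by
        linear_combination F₂₂ * e1 - F₁₂ * e2
      have hy2 : y2 * (F₁₁ * F₂₂ - F₁₂ * F₂₁) = (r2 - r0) * F₁₁ - (r1 - r0) * F₂₁ := by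
        linear_combination F₁₁ * e2 - F₂₁ * e1
      refine Prod.ext ?_ (Prod.ext ?_ rfl)
      · exact (eq_div_iff hΔ).mpr hy1
      · exact (eq_div_iff hΔ).mpr hy2
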